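/- Let 0 < γ < 1/2 and [a,b] ⊂ ℝ compact. Then there exists C > 0 such that for all n ≥ 1 and all j ∈ {0,1,2}: sup_{s,t∈[a,b]} Σ_{p∈ℤ, |p|≤n^γ} | K_n^{(j)}(p(t−s)) − K^{(j)}(p(t−s)) | ≤ C / n^{1−2γ}. -/

import Mathlib

open Filter Set

noncomputable section

/-- `K` and its first two derivatives: `K(x) = ∫₀¹ e^{iux} du`,
`K'(x) = i∫₀¹ u e^{iux} du`, `K''(x) = −∫₀¹ u² e^{iux} du`. -/
def Kd : ℕ → ℝ → ℂ
  | 0, x => ∫ u in (0:ℝ)..1, Complex.exp (Complex.I * u * x)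
  | 1, x => Complex.I * ∫ u in (0:ℝ)..1, (u:ℂ) * Complex.exp (Complex.I * u * x)
  | _, x => - ∫ u in (0:ℝ)..1, (u:ℂ)^2 * Complex.exp (Complex.I * u * x)

/-- `K_n` and its first two derivatives: `K_n(x) = (1/n) Σ_{k=1}^n e^{ikx/n}`,
`K_n'(x) = (i/n) Σ (k/n) e^{ikx/n}`, `K_n''(x) = −(1/n) Σ (k/n)² e^{ikx/n}`. -/
def Knd : ℕ → ℕ → ℝ → ℂ
  | 0, n, x => (1 / (n:ℂ)) * ∑ k ∈ Finset.Icc 1 n, Complex.exp (Complex.I * k * x / n)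
  | 1, n, x => (Complex.I / (n:ℂ)) * ∑ k ∈ Finset.Icc 1 n,
      (((k:ℝ) / n : ℝ) : ℂ) * Complex.exp (Complex.I * k * x / n)
  | _, n, x => -(1 / (n:ℂ)) * ∑ k ∈ Finset.Icc 1 n,
      (((k:ℝ) / n : ℝ) : ℂ)^2 * Complex.exp (Complex.I * k * x / n)

def ff (j : ℕ) (x : ℝ) : ℝ → ℂ := fun u => ((u:ℂ))^j * Complex.exp (Complex.I * u * x)

lemma ff_deriv (j : ℕ) (x : ℝ) (u : ℝ) :
    HasDerivAt (ff j x)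
      ((j:ℂ) * (u:ℂ)^(j-1) * Complex.exp (Complex.I * u * x)
        + (u:ℂ)^j * (Complex.I * x) * Complex.exp (Complex.I * u * x)) u := by
  have h2 : HasDerivAt (fun z : ℂ => Complex.exp (Complex.I * z * x))
      (Complex.exp (Complex.I * u * x) * (Complex.I * 1 * x)) (u:ℂ) :=
    (((hasDerivAt_id ((u:ℝ):ℂ)).const_mul Complex.I).mul_const (x:ℂ)).cexp
  have h := (hasDerivAt_pow j ((u:ℝ):ℂ)).mul h2
  have h' := h.comp_ofReal
  convert h' using 1
  · rfl
  ring

lemma ff_cont (j : ℕ) (x : ℝ) : Continuous (ff j x) := by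
  unfold ff; fun_prop

lemma ff_lip (j : ℕ) (hj : j ≤ 2) (x : ℝ) :
    ∀ u ∈ Set.Icc (0:ℝ) 1, ∀ v ∈ Set.Icc (0:ℝ) 1,
      ‖ff j x u - ff j x v‖ ≤ (2 + |x|) * |u - v| := by
  intro u hu v hv
  have := (convex_Icc (0:ℝ) 1).norm_image_sub_le_of_norm_hasDerivWithin_le
    (f := ff j x)
    (f' := fun u : ℝ => (j:ℂ) * (u:ℂ)^(j-1) * Complex.exp (Complex.I * u * x)
        + (u:ℂ)^j * (Complex.I * x) * Complex.exp (Complex.I * u * x))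
    (fun w _ => (ff_deriv j x w).hasDerivWithinAt)
    (C := 2 + |x|) ?_ hv hu
  · simpa [Real.norm_eq_abs] using this
  · intro w hw
    have hexp : ‖Complex.exp (Complex.I * w * x)‖ = 1 := by
      rw [Complex.norm_exp]
      simp
    have hw1 : |(w:ℝ)| ≤ 1 := by
      rw [abs_le]; constructor <;> linarith [hw.1, hw.2]
    have hwp : ∀ m : ℕ, ‖(w:ℂ)^m‖ ≤ 1 := by
      intro m
      rw [norm_pow]
      apply pow_le_one₀ (by positivity)
      simpa using hw1
    calc ‖(j:ℂ) * (w:ℂ)^(j-1) * Complex.exp (Complex.I * w * x)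
          + (w:ℂ)^j * (Complex.I * x) * Complex.exp (Complex.I * w * x)‖
        ≤ ‖(j:ℂ) * (w:ℂ)^(j-1) * Complex.exp (Complex.I * w * x)‖
          + ‖(w:ℂ)^j * (Complex.I * x) * Complex.exp (Complex.I * w * x)‖ := norm_add_le _ _
      _ ≤ 2 + |x| := by
          simp only [norm_mul, hexp, mul_one, Complex.norm_natCast,
            Complex.norm_I, one_mul, Complex.norm_real, Real.norm_eq_abs]
          have h1 : (j:ℝ) * ‖(w:ℂ)^(j-1)‖ ≤ 2 :=
            calc (j:ℝ) * ‖(w:ℂ)^(j-1)‖ ≤ (j:ℝ) * 1 := by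
                  apply mul_le_mul_of_nonneg_left (hwp _) (by positivity)
              _ ≤ 2 := by rw [mul_one]; exact_mod_cast hj
          have h2 : ‖(w:ℂ)^j‖ * |x| ≤ |x| := by
            calc ‖(w:ℂ)^j‖ * |x| ≤ 1 * |x| :=
                  mul_le_mul_of_nonneg_right (hwp _) (abs_nonneg _)
              _ = |x| := one_mul _
          linarith

lemma riemann_bound (f : ℝ → ℂ) (hf : Continuous f) (L : ℝ) (hL : 0 ≤ L)
    (hlip : ∀ u ∈ Set.Icc (0:ℝ) 1, ∀ v ∈ Set.Icc (0:ℝ) 1, ‖f u - f v‖ ≤ L * |u - v|)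
    (n : ℕ) (hn : 1 ≤ n) :
    ‖(1 / (n:ℂ)) * ∑ k ∈ Finset.Icc 1 n, f ((k:ℝ)/n) - ∫ u in (0:ℝ)..1, f u‖ ≤ L / n := by
  have hn0 : (0:ℝ) < n := by exact_mod_cast hn
  have hnne : (n:ℝ) ≠ 0 := ne_of_gt hn0
  set a : ℕ → ℝ := fun k => (k:ℝ)/n with ha
  have hsplit : ∑ k ∈ Finset.range n, ∫ u in a k..a (k+1), f u = ∫ u in (a 0)..(a n), f u :=
    intervalIntegral.sum_integral_adjacent_intervals (fun k _ => hf.intervalIntegrable _ _)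
  have ha0 : a 0 = 0 := by simp [ha]
  have han : a n = 1 := by simp [ha, hnne]
  have hsum : (1 / (n:ℂ)) * ∑ k ∈ Finset.Icc 1 n, f ((k:ℝ)/n)
      = ∑ k ∈ Finset.range n, (1/(n:ℂ)) * f (a (k+1)) := by
    rw [Finset.mul_sum, ← Finset.Ico_add_one_right_eq_Icc, Finset.sum_Ico_eq_sum_range]
    simp only [Nat.succ_sub_one, Nat.add_sub_cancel]
    apply Finset.sum_congr rfl
    intro k _
    simp only [ha]
    norm_num [add_comm]
  rw [hsum, ← ha0, ← han, ← hsplit, ← Finset.sum_sub_distrib]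
  refine le_trans (norm_sum_le _ _) ?_
  have hterm : ∀ k ∈ Finset.range n,
      ‖(1/(n:ℂ)) * f (a (k+1)) - ∫ u in a k..a (k+1), f u‖ ≤ L / n^2 := by
    intro k hk
    have hkn : (k:ℝ) + 1 ≤ n := by
      have : k + 1 ≤ n := Finset.mem_range.mp hk
      exact_mod_cast this
    have hk0 : (0:ℝ) ≤ k := Nat.cast_nonneg k
    have hle : a k ≤ a (k+1) := by
      simp only [ha]
      gcongr
      exact_mod_cast Nat.le_succ k
    have hdiff : a (k+1) - a k = 1/(n:ℝ) := by
      simp only [ha]; push_cast; field_simp; ring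
    have hmem : a (k+1) ∈ Set.Icc (0:ℝ) 1 := by
      constructor
      · simp only [ha]; positivity
      · simp only [ha]; rw [div_le_one hn0]; push_cast; linarith
    have hconst : (1/(n:ℂ)) * f (a (k+1)) = ∫ _ in a k..a (k+1), f (a (k+1)) := by
      rw [intervalIntegral.integral_const, hdiff, Complex.real_smul]
      push_cast
      ring
    rw [hconst, ← intervalIntegral.integral_sub (by simp) (hf.intervalIntegrable _ _)]
    have hbd : ∀ u ∈ Set.uIoc (a k) (a (k+1)), ‖f (a (k+1)) - f u‖ ≤ L / n := by
      intro u hu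
      rw [Set.uIoc_of_le hle] at hu
      have hak0 : (0:ℝ) ≤ a k := by simp only [ha]; positivity
      have humem : u ∈ Set.Icc (0:ℝ) 1 := ⟨le_trans hak0 hu.1.le, le_trans hu.2 hmem.2⟩
      refine le_trans (hlip _ hmem _ humem) ?_
      have habs : |a (k+1) - u| ≤ 1/(n:ℝ) := by
        rw [abs_of_nonneg (by linarith [hu.2])]
        linarith [hu.1, hdiff]
      calc L * |a (k+1) - u| ≤ L * (1/(n:ℝ)) := mul_le_mul_of_nonneg_left habs hL
        _ = L / n := by ring
    refine le_trans (intervalIntegral.norm_integral_le_of_norm_le_const hbd) ?_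
    rw [abs_of_nonneg (by linarith [hdiff]), hdiff]
    have : L / (n:ℝ) * (1/(n:ℝ)) = L / n^2 := by
      rw [div_mul_div_comm, mul_one, sq]
    exact this.le
  refine le_trans (Finset.sum_le_sum hterm) ?_
  rw [Finset.sum_const, Finset.card_range, nsmul_eq_mul]
  have : (n:ℝ) * (L/n^2) = L/n := by
    rw [sq]
    field_simp
  exact this.le

lemma term_bound (j : ℕ) (hj : j ≤ 2) (n : ℕ) (hn : 1 ≤ n) (x : ℝ) :
    ‖Knd j n x - Kd j x‖ ≤ (2 + |x|) / n := by
  have hL : (0:ℝ) ≤ 2 + |x| := by positivity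
  have hR : ∀ j', j' ≤ 2 → ‖
      (1/(n:ℂ)) * (∑ k ∈ Finset.Icc 1 n, ff j' x ((k:ℝ)/n)) - ∫ u in (0:ℝ)..1, ff j' x u‖
      ≤ (2 + |x|) / n := fun j' hj' =>
    riemann_bound (ff j' x) (ff_cont j' x) _ hL (ff_lip j' hj' x) n hn
  have hexp : ∀ k : ℕ, Complex.exp (Complex.I * k * x / n)
      = Complex.exp (Complex.I * (((k:ℝ)/n : ℝ):ℂ) * x) := by
    intro k; congr 1; push_cast; ring
  interval_cases j
  · have hsum : ∑ k ∈ Finset.Icc 1 n, Complex.exp (Complex.I * k * x / n)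
        = ∑ k ∈ Finset.Icc 1 n, ff 0 x ((k:ℝ)/n) :=
      Finset.sum_congr rfl fun k _ => by rw [hexp k]; simp [ff]
    have hint : (∫ u in (0:ℝ)..1, Complex.exp (Complex.I * u * x))
        = ∫ u in (0:ℝ)..1, ff 0 x u :=
      intervalIntegral.integral_congr (by intro u _; simp [ff])
    have he : Knd 0 n x - Kd 0 x
        = (1/(n:ℂ)) * (∑ k ∈ Finset.Icc 1 n, ff 0 x ((k:ℝ)/n)) - ∫ u in (0:ℝ)..1, ff 0 x u := by
      simp only [Knd, Kd]
      rw [hsum, hint]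
    rw [he]; exact hR 0 (by norm_num)
  · have hsum : ∑ k ∈ Finset.Icc 1 n, (((k:ℝ)/n : ℝ):ℂ) * Complex.exp (Complex.I * k * x / n)
        = ∑ k ∈ Finset.Icc 1 n, ff 1 x ((k:ℝ)/n) :=
      Finset.sum_congr rfl fun k _ => by rw [hexp k]; simp [ff]
    have hint : (∫ u in (0:ℝ)..1, (u:ℂ) * Complex.exp (Complex.I * u * x))
        = ∫ u in (0:ℝ)..1, ff 1 x u :=
      intervalIntegral.integral_congr (by intro u _; simp [ff])
    have he : Knd 1 n x - Kd 1 x = Complex.I *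
        ((1/(n:ℂ)) * (∑ k ∈ Finset.Icc 1 n, ff 1 x ((k:ℝ)/n)) - ∫ u in (0:ℝ)..1, ff 1 x u) := by
      simp only [Knd, Kd]
      rw [hsum, hint, mul_sub, ← mul_assoc, mul_one_div]
    rw [he, norm_mul, Complex.norm_I, one_mul]; exact hR 1 (by norm_num)
  · have hsum : ∑ k ∈ Finset.Icc 1 n, (((k:ℝ)/n : ℝ):ℂ)^2 * Complex.exp (Complex.I * k * x / n)
        = ∑ k ∈ Finset.Icc 1 n, ff 2 x ((k:ℝ)/n) :=
      Finset.sum_congr rfl fun k _ => by rw [hexp k]; simp [ff]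
    have hint : (∫ u in (0:ℝ)..1, (u:ℂ)^2 * Complex.exp (Complex.I * u * x))
        = ∫ u in (0:ℝ)..1, ff 2 x u :=
      intervalIntegral.integral_congr (by intro u _; simp [ff])
    have he : Knd 2 n x - Kd 2 x = -
        ((1/(n:ℂ)) * (∑ k ∈ Finset.Icc 1 n, ff 2 x ((k:ℝ)/n)) - ∫ u in (0:ℝ)..1, ff 2 x u) := by
      simp only [Knd, Kd]
      rw [hsum, hint, neg_sub, neg_mul, sub_neg_eq_add, neg_add_eq_sub]
    rw [he, norm_neg]; exact hR 2 (by norm_num)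

theorem statement17 (γ : ℝ) (hγ0 : 0 < γ) (hγ : γ < 1/2) (a b : ℝ) (hab : a ≤ b) :
    ∃ C : ℝ, 0 < C ∧ ∀ n : ℕ, 1 ≤ n → ∀ j : ℕ, j ≤ 2 →
      ∀ s ∈ Set.Icc a b, ∀ t ∈ Set.Icc a b,
      ∑ pp ∈ Finset.Icc (-(⌊(n:ℝ) ^ γ⌋)) ⌊(n:ℝ) ^ γ⌋,
        ‖Knd j n ((pp : ℝ) * (t - s)) - Kd j ((pp : ℝ) * (t - s))‖
      ≤ C / (n:ℝ) ^ (1 - 2 * γ) := by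
  have hD : 0 ≤ b - a := by linarith
  refine ⟨3 * (2 + (b - a)), by linarith, ?_⟩
  intro n hn j hj s hs t ht
  have hn0 : (0:ℝ) < n := by exact_mod_cast hn
  have hn1 : (1:ℝ) ≤ n := by exact_mod_cast hn
  set P : ℝ := (n:ℝ) ^ γ with hP
  have hP1 : 1 ≤ P := Real.one_le_rpow hn1 hγ0.le
  have hP0 : 0 < P := by linarith
  set M : ℤ := ⌊P⌋ with hM
  have hM0 : 0 ≤ M := Int.floor_nonneg.mpr (by linarith)
  have hMle : (M:ℝ) ≤ P := Int.floor_le P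
  have hts : |t - s| ≤ b - a := by
    rw [abs_sub_le_iff]
    constructor <;> [linarith [ht.2, hs.1]; linarith [ht.1, hs.2]]
  have hpoint : ∀ pp ∈ Finset.Icc (-M) M,
      ‖Knd j n ((pp : ℝ) * (t - s)) - Kd j ((pp : ℝ) * (t - s))‖
        ≤ (2 + P * (b - a)) / n := by
    intro pp hpp
    refine le_trans (term_bound j hj n hn _) ?_
    have h1 : |(pp:ℝ)| ≤ P := by
      rw [Finset.mem_Icc] at hpp
      have : |pp| ≤ M := abs_le.mpr ⟨by linarith [hpp.1], hpp.2⟩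
      calc |(pp:ℝ)| = ((|pp| : ℤ) : ℝ) := by push_cast; rfl
        _ ≤ (M:ℝ) := by exact_mod_cast this
        _ ≤ P := hMle
    have h2 : |(pp:ℝ) * (t - s)| ≤ P * (b - a) := by
      rw [abs_mul]
      exact mul_le_mul h1 hts (abs_nonneg _) hP0.le
    gcongr
  have hcard : ((Finset.Icc (-M) M).card : ℝ) = 2*(M:ℝ) + 1 := by
    rw [Int.card_Icc]
    have h : M + 1 - -M = 2*M + 1 := by ring
    rw [h]
    have h2 : (((2*M + 1 : ℤ).toNat : ℕ) : ℝ) = 2*(M:ℝ) + 1 := by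
      exact_mod_cast congrArg (Int.cast : ℤ → ℝ) (Int.toNat_of_nonneg (by linarith))
    exact h2
  have hQ : (0:ℝ) < (n:ℝ)^(1-2*γ) := Real.rpow_pos_of_pos hn0 _
  have key : (n:ℝ)^(1-2*γ) * (P*P) = n := by
    have h1 : 1-2*γ + (γ+γ) = 1 := by ring
    rw [hP, ← Real.rpow_add hn0 γ γ, ← Real.rpow_add hn0, h1, Real.rpow_one]
  calc ∑ pp ∈ Finset.Icc (-M) M,
        ‖Knd j n ((pp : ℝ) * (t - s)) - Kd j ((pp : ℝ) * (t - s))‖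
      ≤ (Finset.Icc (-M) M).card • ((2 + P*(b-a))/n) :=
        Finset.sum_le_card_nsmul _ _ _ hpoint
    _ = (2*(M:ℝ) + 1) * ((2 + P*(b-a))/n) := by rw [nsmul_eq_mul, hcard]
    _ ≤ (3*P) * ((2 + P*(b-a))/n) := by
        apply mul_le_mul_of_nonneg_right (by linarith) (by positivity)
    _ ≤ 3 * (2 + (b - a)) / (n:ℝ)^(1-2*γ) := by
        rw [← mul_div_assoc, div_le_div_iff₀ hn0 hQ]
        nlinarith [key, mul_nonneg (mul_nonneg (show (0:ℝ) ≤ P - 1 by linarith) hP0.le) hQ.le,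
          hD, hQ.le, hP0.le]

end
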